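/- Under the same hypotheses as the small-step gradient bound (‖d‖ ≤ Δ ≤ √2/2, M-Lipschitz Hessian, ∇²f(x_k) ⪯ U_H·I), with x_{k+1} = x_k + d, the Hessian at the next iterate satisfies ∇²f(x_{k+1}) ⪰ -(2(U_H+δ)Δ² + MΔ + δ)·I. -/

import Mathlib

set_option maxHeartbeats 1000000 in
/-- Small-step case: the Hessian at the next iterate `x_{k+1} = x_k + d` is
nearly positive semidefinite. -/
theorem next_iterate_hessian_bound {n : ℕ}
    (f : EuclideanSpace ℝ (Fin n) → ℝ)
    (gf : EuclideanSpace ℝ (Fin n) → EuclideanSpace ℝ (Fin n))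
    (Hf : EuclideanSpace ℝ (Fin n) → EuclideanSpace ℝ (Fin n) →L[ℝ] EuclideanSpace ℝ (Fin n))
    (M U_H δ θ Δ : ℝ)
    (hgrad : ∀ x, HasGradientAt f (gf x) x)
    (hhess : ∀ x, HasFDerivAt gf (Hf x) x)
    (hlip : ∀ x y, ‖Hf x - Hf y‖ ≤ M * ‖x - y‖)
    (xk : EuclideanSpace ℝ (Fin n))
    (hUH : ∀ w, (inner ℝ (Hf xk w) w : ℝ) ≤ U_H * ‖w‖ ^ 2)
    (hgk : gf xk ≠ 0) (hδ : 0 ≤ δ) (hθ : δ < θ)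
    (v : EuclideanSpace ℝ (Fin n)) (t : ℝ) (ht : t ≠ 0)
    (hunit : ‖v‖ ^ 2 + t ^ 2 = 1)
    (heig1 : Hf xk v + t • gf xk = (-θ) • v)
    (heig2 : (inner ℝ (gf xk) v : ℝ) - δ * t = -θ * t)
    (hmin : ∀ (w : EuclideanSpace ℝ (Fin n)) (s : ℝ),
      (-θ) * (‖w‖ ^ 2 + s ^ 2) ≤
        (inner ℝ (Hf xk w) w : ℝ) + 2 * s * (inner ℝ (gf xk) w : ℝ) - δ * s ^ 2)
    (hd : ‖t⁻¹ • v‖ ≤ Δ) (hΔ : Δ ≤ Real.sqrt 2 / 2) :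
    ∀ w : EuclideanSpace ℝ (Fin n),
      -(2 * (U_H + δ) * Δ ^ 2 + M * Δ + δ) * ‖w‖ ^ 2 ≤
        (inner ℝ (Hf (xk + t⁻¹ • v) w) w : ℝ) := by
  intro w
  set d : EuclideanSpace ℝ (Fin n) := t⁻¹ • v with hdd
  have ht2 : (0:ℝ) < t ^ 2 := by positivity
  have hΔ0 : 0 ≤ Δ := le_trans (norm_nonneg _) hd
  have hΔ2 : Δ ^ 2 ≤ 1 / 2 := by
    nlinarith [Real.sq_sqrt (by norm_num : (0:ℝ) ≤ 2), Real.sqrt_nonneg 2]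
  have hgpos : 0 < ‖gf xk‖ := norm_pos_iff.mpr hgk
  have hM : 0 ≤ M := by
    have h1 := hlip xk (xk + gf xk)
    have h2 : xk - (xk + gf xk) = -gf xk := by abel
    rw [h2, norm_neg] at h1
    nlinarith [norm_nonneg (Hf xk - Hf (xk + gf xk))]
  -- inner of eigen equation with v
  have h1 : (inner ℝ (Hf xk v) v : ℝ) + t * (inner ℝ (gf xk) v : ℝ) = -θ * ‖v‖ ^ 2 := by
    have h0 : (inner ℝ (Hf xk v + t • gf xk) v : ℝ) = (inner ℝ ((-θ) • v) v : ℝ) := by rw [heig1]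
    rw [inner_add_left, real_inner_smul_left, real_inner_smul_left,
      real_inner_self_eq_norm_sq] at h0
    linarith [h0]
  have h2 : (inner ℝ (gf xk) v : ℝ) = δ * t - θ * t := by linarith
  have hHvv : (inner ℝ (Hf xk v) v : ℝ) = -θ * ‖v‖ ^ 2 - t * (δ * t - θ * t) := by
    rw [← h2]; linarith
  have hUHv := hUH v
  have key : (θ - δ) * t ^ 2 ≤ (U_H + θ) * ‖v‖ ^ 2 := by nlinarith
  have hv2 : ‖v‖ ^ 2 = t ^ 2 * ‖d‖ ^ 2 := by
    rw [hdd, norm_smul, norm_inv, Real.norm_eq_abs, mul_pow, inv_pow, sq_abs]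
    field_simp
  have hd2 : ‖d‖ ^ 2 ≤ Δ ^ 2 := by nlinarith [norm_nonneg d]
  have hUθ : 0 ≤ U_H + θ := by
    have ha := hmin (gf xk) 0
    have hb := hUH (gf xk)
    nlinarith
  have key2 : θ - δ ≤ (U_H + θ) * Δ ^ 2 := by
    have : (θ - δ) * t ^ 2 ≤ (U_H + θ) * Δ ^ 2 * t ^ 2 := by
      rw [hv2] at key
      nlinarith [mul_le_mul_of_nonneg_left hd2 hUθ]
    exact le_of_mul_le_mul_right (by linarith [this]) ht2
  have θbound : θ ≤ δ + 2 * (U_H + δ) * Δ ^ 2 := by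
    nlinarith [mul_nonneg (by linarith : (0:ℝ) ≤ θ - δ) (by linarith : (0:ℝ) ≤ 1 - 2 * Δ ^ 2)]
  -- perturbation bound
  have hlipd := hlip (xk + d) xk
  have hxd : xk + d - xk = d := by abel
  rw [hxd] at hlipd
  have hpert : |(inner ℝ ((Hf (xk + d) - Hf xk) w) w : ℝ)| ≤ M * Δ * ‖w‖ ^ 2 := by
    have h3 := abs_real_inner_le_norm ((Hf (xk + d) - Hf xk) w) w
    have h4 := (Hf (xk + d) - Hf xk).le_opNorm w
    have h5 : ‖Hf (xk + d) - Hf xk‖ ≤ M * Δ := by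
      calc ‖Hf (xk + d) - Hf xk‖ ≤ M * ‖d‖ := hlipd
        _ ≤ M * Δ := by nlinarith
    nlinarith [norm_nonneg w, norm_nonneg ((Hf (xk + d) - Hf xk) w),
      norm_nonneg (Hf (xk + d) - Hf xk)]
  have hmin0 := hmin w 0
  have hsplit : (inner ℝ (Hf (xk + d) w) w : ℝ) =
      (inner ℝ (Hf xk w) w : ℝ) + (inner ℝ ((Hf (xk + d) - Hf xk) w) w : ℝ) := by
    rw [ContinuousLinearMap.sub_apply, inner_sub_left]; ring
  rw [hsplit]
  have habs := abs_le.mp hpert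
  nlinarith [norm_nonneg w, sq_nonneg (‖w‖)]
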